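/- Fix a real number $d > 0$ and integers $m_1, m_2, m_3 \geq 2$ with $\frac{1}{m_1-1} + \frac{1}{m_2-1} + \frac{1}{m_3-1} > 1$, and define $g_m$ as follows: $g_m(q) = \frac{m-1}{2m}(d+q)^2$ if $(m-1)q \leq d$, and $g_m(q) = d^2 - \frac{m-1}{2(m-2)}(d-q)^2$ if $(m-1)q > d$. Then for all nonnegative reals $p, p_1, p_2, p_3$ with $p + p_1 + p_2 + p_3 = d$, one has $g_{m_1}(p_1) + g_{m_2}(p_2) + g_{m_3}(p_3) < 2d^2$ (strict inequality). -/

import Mathlib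

open Classical in
noncomputable def g (d : ℝ) (m : ℕ) (q : ℝ) : ℝ :=
  if ((m : ℝ) - 1) * q ≤ d then ((m : ℝ) - 1) / (2 * m) * (d + q) ^ 2
  else d ^ 2 - ((m : ℝ) - 1) / (2 * ((m : ℝ) - 2)) * (d - q) ^ 2

open Classical in
noncomputable def G (d a q : ℝ) : ℝ :=
  if a * q ≤ d then a / (2 * (a + 1)) * (d + q) ^ 2
  else d ^ 2 - a / (2 * (a - 1)) * (d - q) ^ 2

lemma g_eq_G (d : ℝ) (m : ℕ) (q : ℝ) : g d m q = G d ((m : ℝ) - 1) q := by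
  unfold g G
  by_cases h : ((m : ℝ) - 1) * q ≤ d
  · rw [if_pos h, if_pos h]; ring_nf
  · rw [if_neg h, if_neg h]; ring_nf

lemma hsum_poly (a₁ a₂ a₃ : ℝ) (ha₁ : 0 < a₁) (ha₂ : 0 < a₂) (ha₃ : 0 < a₃)
    (hs : 1 < 1/a₁ + 1/a₂ + 1/a₃) :
    a₁*a₂*a₃ < a₂*a₃ + a₁*a₃ + a₁*a₂ := by
  have e : 1/a₁ + 1/a₂ + 1/a₃ = (a₂*a₃ + a₁*a₃ + a₁*a₂)/(a₁*a₂*a₃) := by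
    field_simp
  rw [e, lt_div_iff₀ (by positivity)] at hs
  linarith

/-- All three in branch 1. -/
lemma caseA (d a₁ a₂ a₃ p q₁ q₂ q₃ : ℝ) (hd : 0 < d)
    (ha₁ : 1 ≤ a₁) (ha₂ : 1 ≤ a₂) (ha₃ : 1 ≤ a₃)
    (hq₁ : 0 ≤ q₁) (hq₂ : 0 ≤ q₂) (hq₃ : 0 ≤ q₃) (hp : 0 ≤ p)
    (hps : p + q₁ + q₂ + q₃ = d)
    (hs : 1 < 1/a₁ + 1/a₂ + 1/a₃)
    (hb₁ : a₁*q₁ ≤ d) (hb₂ : a₂*q₂ ≤ d) (hb₃ : a₃*q₃ ≤ d) :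
    a₁/(2*(a₁+1))*(d+q₁)^2 + a₂/(2*(a₂+1))*(d+q₂)^2 + a₃/(2*(a₃+1))*(d+q₃)^2
      < 2*d^2 := by
  have h0₁ : (0:ℝ) < a₁ := by linarith
  have h0₂ : (0:ℝ) < a₂ := by linarith
  have h0₃ : (0:ℝ) < a₃ := by linarith
  have k₁ : a₁/(2*(a₁+1))*(d+q₁)^2 ≤ d^2/2 + d*q₁/2 - d*(d-a₁*q₁)/(4*a₁) := by
    have hid : d^2/2 + d*q₁/2 - d*(d-a₁*q₁)/(4*a₁) - a₁/(2*(a₁+1))*(d+q₁)^2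
        = (d-a₁*q₁)*((a₁-1)*d+2*a₁*q₁)/(4*(a₁*(a₁+1))) := by
      field_simp; ring
    have hnum : 0 ≤ (d-a₁*q₁)*((a₁-1)*d+2*a₁*q₁) := by
      apply mul_nonneg (by linarith)
      nlinarith
    have := div_nonneg hnum (by positivity : (0:ℝ) ≤ 4*(a₁*(a₁+1)))
    linarith
  have k₂ : a₂/(2*(a₂+1))*(d+q₂)^2 ≤ d^2/2 + d*q₂/2 - d*(d-a₂*q₂)/(4*a₂) := by
    have hid : d^2/2 + d*q₂/2 - d*(d-a₂*q₂)/(4*a₂) - a₂/(2*(a₂+1))*(d+q₂)^2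
        = (d-a₂*q₂)*((a₂-1)*d+2*a₂*q₂)/(4*(a₂*(a₂+1))) := by
      field_simp; ring
    have hnum : 0 ≤ (d-a₂*q₂)*((a₂-1)*d+2*a₂*q₂) := by
      apply mul_nonneg (by linarith)
      nlinarith
    have := div_nonneg hnum (by positivity : (0:ℝ) ≤ 4*(a₂*(a₂+1)))
    linarith
  have k₃ : a₃/(2*(a₃+1))*(d+q₃)^2 ≤ d^2/2 + d*q₃/2 - d*(d-a₃*q₃)/(4*a₃) := by
    have hid : d^2/2 + d*q₃/2 - d*(d-a₃*q₃)/(4*a₃) - a₃/(2*(a₃+1))*(d+q₃)^2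
        = (d-a₃*q₃)*((a₃-1)*d+2*a₃*q₃)/(4*(a₃*(a₃+1))) := by
      field_simp; ring
    have hnum : 0 ≤ (d-a₃*q₃)*((a₃-1)*d+2*a₃*q₃) := by
      apply mul_nonneg (by linarith)
      nlinarith
    have := div_nonneg hnum (by positivity : (0:ℝ) ≤ 4*(a₃*(a₃+1)))
    linarith
  have e₁ : d*(d-a₁*q₁)/(4*a₁) = d^2/4*(1/a₁) - d*q₁/4 := by field_simp
  have e₂ : d*(d-a₂*q₂)/(4*a₂) = d^2/4*(1/a₂) - d*q₂/4 := by field_simp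
  have e₃ : d*(d-a₃*q₃)/(4*a₃) = d^2/4*(1/a₃) - d*q₃/4 := by field_simp
  have hs2 : d^2/4*1 < d^2/4*(1/a₁ + 1/a₂ + 1/a₃) :=
    mul_lt_mul_of_pos_left hs (by positivity)
  have exp : d^2/4*(1/a₁ + 1/a₂ + 1/a₃)
      = d^2/4*(1/a₁) + d^2/4*(1/a₂) + d^2/4*(1/a₃) := by ring
  have hdq : d*q₁ + d*q₂ + d*q₃ = d^2 - d*p := by
    have h' : q₁ + q₂ + q₃ = d - p := by linarith
    calc d*q₁ + d*q₂ + d*q₃ = d*(q₁+q₂+q₃) := by ring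
      _ = d*(d-p) := by rw [h']
      _ = d^2 - d*p := by ring
  have hdp : 0 ≤ d*p := mul_nonneg hd.le hp
  linarith

/-- First two in branch 1, third in branch 2. -/
lemma caseB (d a₁ a₂ a₃ p q₁ q₂ q₃ : ℝ) (hd : 0 < d)
    (ha₁ : 1 ≤ a₁) (ha₂ : 1 ≤ a₂) (ha₃ : 1 ≤ a₃)
    (hq₁ : 0 ≤ q₁) (hq₂ : 0 ≤ q₂) (hq₃ : 0 ≤ q₃) (hp : 0 ≤ p)
    (hps : p + q₁ + q₂ + q₃ = d)
    (hs : 1 < 1/a₁ + 1/a₂ + 1/a₃)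
    (hb₁ : a₁*q₁ ≤ d) (hb₂ : a₂*q₂ ≤ d) (hb₃ : d < a₃*q₃) :
    a₁/(2*(a₁+1))*(d+q₁)^2 + a₂/(2*(a₂+1))*(d+q₂)^2
      + (d^2 - a₃/(2*(a₃-1))*(d-q₃)^2) < 2*d^2 := by
  have h0₁ : (0:ℝ) < a₁ := by linarith
  have h0₂ : (0:ℝ) < a₂ := by linarith
  have hq₃d : q₃ ≤ d := by linarith
  have ha₃' : 1 < a₃ := by
    by_contra hcon
    push_neg at hcon
    have := mul_le_mul_of_nonneg_right hcon hq₃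
    rw [one_mul] at this
    linarith
  have ha₃0 : (0:ℝ) < a₃ - 1 := by linarith
  have hne₃ : a₃ - 1 ≠ 0 := ne_of_gt ha₃0
  have hne₁ : a₁ + 1 ≠ 0 := by positivity
  have hne₂ : a₂ + 1 ≠ 0 := by positivity
  have hne₁₂ : a₁ + a₂ ≠ 0 := by positivity
  have k₁ : a₁/(2*(a₁+1))*(d+q₁)^2
      = d^2/2 + a₁*q₁^2/2 - (d-a₁*q₁)^2/(2*(a₁+1)) := by
    field_simp; ring
  have k₂ : a₂/(2*(a₂+1))*(d+q₂)^2
      = d^2/2 + a₂*q₂^2/2 - (d-a₂*q₂)^2/(2*(a₂+1)) := by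
    field_simp; ring
  have ht : d - q₃ = p + q₁ + q₂ := by linarith
  rcases eq_or_lt_of_le (by positivity : (0:ℝ) ≤ p + q₁ + q₂) with h0 | h0
  · -- degenerate case p = q₁ = q₂ = 0
    have hp0 : p = 0 := by linarith
    have hq10 : q₁ = 0 := by linarith
    have hq20 : q₂ = 0 := by linarith
    have e3 : a₃/(2*(a₃-1))*(d-q₃)^2 = 0 := by
      have : d - q₃ = 0 := by linarith
      rw [this]; ring
    have w₁ : 0 < (d-a₁*q₁)^2/(2*(a₁+1)) := by
      have : d - a₁*q₁ = d := by rw [hq10]; ring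
      rw [this]; positivity
    have w₂ : 0 < (d-a₂*q₂)^2/(2*(a₂+1)) := by
      have : d - a₂*q₂ = d := by rw [hq20]; ring
      rw [this]; positivity
    have z₁ : a₁*q₁^2/2 = 0 := by rw [hq10]; ring
    have z₂ : a₂*q₂^2/2 = 0 := by rw [hq20]; ring
    linarith
  · -- main case: p + q₁ + q₂ > 0
    have hpoly := hsum_poly a₁ a₂ a₃ h0₁ h0₂ (by linarith) hs
    have hstep2 : a₁*a₂/(2*(a₁+a₂))*(p+q₁+q₂)^2 < a₃/(2*(a₃-1))*(d-q₃)^2 := by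
      rw [ht]
      have hid2 : a₃/(2*(a₃-1))*(p+q₁+q₂)^2 - a₁*a₂/(2*(a₁+a₂))*(p+q₁+q₂)^2
          = (p+q₁+q₂)^2*((a₂*a₃ + a₁*a₃ + a₁*a₂) - a₁*a₂*a₃)
            /(2*((a₃-1)*(a₁+a₂))) := by
        field_simp; ring
      have hposn : 0 < (p+q₁+q₂)^2*((a₂*a₃ + a₁*a₃ + a₁*a₂) - a₁*a₂*a₃) :=
        mul_pos (by positivity) (by linarith)
      have := div_pos hposn (by positivity : (0:ℝ) < 2*((a₃-1)*(a₁+a₂)))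
      linarith
    have hkey : a₁*q₁^2/2 + a₂*q₂^2/2 ≤ a₁*a₂/(2*(a₁+a₂))*(p+q₁+q₂)^2
        + (d-a₁*q₁)^2/(2*(a₁+1)) + (d-a₂*q₂)^2/(2*(a₂+1)) := by
      have hid : a₁*a₂/(2*(a₁+a₂))*(p+q₁+q₂)^2
          + (d-a₁*q₁)^2/(2*(a₁+1)) + (d-a₂*q₂)^2/(2*(a₂+1))
          - (a₁*q₁^2/2 + a₂*q₂^2/2)
          = ((d-a₁*q₁)^2*(a₂-1)/(a₁+1) + (d-a₂*q₂)^2*(a₁-1)/(a₂+1)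
            + 2*((d-a₁*q₁)*(d-a₂*q₂)) + a₁*a₂*(p*(2*q₁+2*q₂+p)))
            /(2*(a₁+a₂)) := by
        field_simp; ring
      have n₁ : 0 ≤ (d-a₁*q₁)^2*(a₂-1)/(a₁+1) :=
        div_nonneg (mul_nonneg (sq_nonneg _) (by linarith)) (by linarith)
      have n₂ : 0 ≤ (d-a₂*q₂)^2*(a₁-1)/(a₂+1) :=
        div_nonneg (mul_nonneg (sq_nonneg _) (by linarith)) (by linarith)
      have n₃ : 0 ≤ 2*((d-a₁*q₁)*(d-a₂*q₂)) := by
        have := mul_nonneg (by linarith : (0:ℝ) ≤ d - a₁*q₁)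
          (by linarith : (0:ℝ) ≤ d - a₂*q₂)
        linarith
      have n₄ : 0 ≤ a₁*a₂*(p*(2*q₁+2*q₂+p)) := by
        apply mul_nonneg (by positivity)
        apply mul_nonneg hp (by linarith)
      have := div_nonneg (by linarith : (0:ℝ) ≤ (d-a₁*q₁)^2*(a₂-1)/(a₁+1)
          + (d-a₂*q₂)^2*(a₁-1)/(a₂+1) + 2*((d-a₁*q₁)*(d-a₂*q₂))
          + a₁*a₂*(p*(2*q₁+2*q₂+p)))
        (by positivity : (0:ℝ) ≤ 2*(a₁+a₂))
      linarith
    linarith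

/-- First in branch 1, last two in branch 2. -/
lemma caseC (d a₁ a₂ a₃ p q₁ q₂ q₃ : ℝ) (hd : 0 < d)
    (ha₁ : 1 ≤ a₁) (ha₂ : 1 ≤ a₂) (ha₃ : 1 ≤ a₃)
    (hq₁ : 0 ≤ q₁) (hq₂ : 0 ≤ q₂) (hq₃ : 0 ≤ q₃) (hp : 0 ≤ p)
    (hps : p + q₁ + q₂ + q₃ = d)
    (hs : 1 < 1/a₁ + 1/a₂ + 1/a₃)
    (hb₁ : a₁*q₁ ≤ d) (hb₂ : d < a₂*q₂) (hb₃ : d < a₃*q₃) :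
    a₁/(2*(a₁+1))*(d+q₁)^2 + (d^2 - a₂/(2*(a₂-1))*(d-q₂)^2)
      + (d^2 - a₃/(2*(a₃-1))*(d-q₃)^2) < 2*d^2 := by
  have h0₁ : (0:ℝ) < a₁ := by linarith
  have hq₂d : q₂ ≤ d := by linarith
  have hq₃d : q₃ ≤ d := by linarith
  have ha₂' : 1 < a₂ := by
    by_contra hcon
    push_neg at hcon
    have := mul_le_mul_of_nonneg_right hcon hq₂
    rw [one_mul] at this
    linarith
  have ha₃' : 1 < a₃ := by
    by_contra hcon
    push_neg at hcon
    have := mul_le_mul_of_nonneg_right hcon hq₃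
    rw [one_mul] at this
    linarith
  have hD : 0 < 2*a₂*a₃ - a₂ - a₃ := by nlinarith
  have hDne : 2*a₂*a₃ - a₂ - a₃ ≠ 0 := ne_of_gt hD
  have hne₂ : a₂ - 1 ≠ 0 := ne_of_gt (show (0:ℝ) < a₂ - 1 by linarith)
  have hne₃ : a₃ - 1 ≠ 0 := ne_of_gt (show (0:ℝ) < a₃ - 1 by linarith)
  have hne₁ : a₁ + 1 ≠ 0 := by positivity
  have hpoly := hsum_poly a₁ a₂ a₃ h0₁ (by linarith) (by linarith) hs
  have ht2 : (d-q₂) + (d-q₃) = d + p + q₁ := by linarith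
  have hS : 0 < (d-q₂) + (d-q₃) := by rw [ht2]; linarith
  have cauchy : a₂*a₃/(2*(2*a₂*a₃-a₂-a₃))*((d-q₂)+(d-q₃))^2
      ≤ a₂/(2*(a₂-1))*(d-q₂)^2 + a₃/(2*(a₃-1))*(d-q₃)^2 := by
    have hid : a₂/(2*(a₂-1))*(d-q₂)^2 + a₃/(2*(a₃-1))*(d-q₃)^2
        - a₂*a₃/(2*(2*a₂*a₃-a₂-a₃))*((d-q₂)+(d-q₃))^2
        = (a₂*(a₃-1)*(d-q₂) - a₃*(a₂-1)*(d-q₃))^2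
          /(2*((a₂-1)*((a₃-1)*(2*a₂*a₃-a₂-a₃)))) := by
      obtain ⟨D, hDdef⟩ : ∃ D, D = 2*a₂*a₃-a₂-a₃ := ⟨_, rfl⟩
      rw [← hDdef] at hDne ⊢
      field_simp; subst hDdef; ring
    have := div_nonneg (sq_nonneg (a₂*(a₃-1)*(d-q₂) - a₃*(a₂-1)*(d-q₃)))
      (le_of_lt (mul_pos (by norm_num : (0:ℝ) < 2)
        (mul_pos (show (0:ℝ) < a₂-1 by linarith)
          (mul_pos (show (0:ℝ) < a₃-1 by linarith) hD))))
    linarith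
  have step2 : a₁/(2*(a₁+1))*((d-q₂)+(d-q₃))^2
      < a₂*a₃/(2*(2*a₂*a₃-a₂-a₃))*((d-q₂)+(d-q₃))^2 := by
    have hid : a₂*a₃/(2*(2*a₂*a₃-a₂-a₃))*((d-q₂)+(d-q₃))^2
        - a₁/(2*(a₁+1))*((d-q₂)+(d-q₃))^2
        = ((d-q₂)+(d-q₃))^2*((a₂*a₃ + a₁*a₃ + a₁*a₂) - a₁*a₂*a₃)
          /(2*((2*a₂*a₃-a₂-a₃)*(a₁+1))) := by
      obtain ⟨D, hDdef⟩ : ∃ D, D = 2*a₂*a₃-a₂-a₃ := ⟨_, rfl⟩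
      rw [← hDdef] at hDne ⊢
      field_simp; subst hDdef; ring
    have hposn : 0 < ((d-q₂)+(d-q₃))^2*((a₂*a₃ + a₁*a₃ + a₁*a₂) - a₁*a₂*a₃) :=
      mul_pos (by positivity) (by linarith)
    have := div_pos hposn
      (by positivity : (0:ℝ) < 2*((2*a₂*a₃-a₂-a₃)*(a₁+1)))
    linarith
  have step3 : a₁/(2*(a₁+1))*(d+q₁)^2 ≤ a₁/(2*(a₁+1))*((d-q₂)+(d-q₃))^2 := by
    have h1 : (0:ℝ) ≤ d + q₁ := by linarith
    have h2 : d + q₁ ≤ (d-q₂) + (d-q₃) := by rw [ht2]; linarith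
    exact mul_le_mul_of_nonneg_left (pow_le_pow_left₀ h1 h2 2)
      (by positivity : (0:ℝ) ≤ a₁/(2*(a₁+1)))
  linarith

/-- All three in branch 2: impossible. -/
lemma caseD (d a₁ a₂ a₃ p q₁ q₂ q₃ : ℝ) (hd : 0 < d)
    (ha₁ : 1 ≤ a₁) (ha₂ : 1 ≤ a₂) (ha₃ : 1 ≤ a₃)
    (hq₁ : 0 ≤ q₁) (hq₂ : 0 ≤ q₂) (hq₃ : 0 ≤ q₃) (hp : 0 ≤ p)
    (hps : p + q₁ + q₂ + q₃ = d)
    (hs : 1 < 1/a₁ + 1/a₂ + 1/a₃)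
    (hb₁ : d < a₁*q₁) (hb₂ : d < a₂*q₂) (hb₃ : d < a₃*q₃) : False := by
  have g₁ : 1/a₁ < q₁/d := by
    rw [div_lt_div_iff₀ (by linarith) hd]; linarith
  have g₂ : 1/a₂ < q₂/d := by
    rw [div_lt_div_iff₀ (by linarith) hd]; linarith
  have g₃ : 1/a₃ < q₃/d := by
    rw [div_lt_div_iff₀ (by linarith) hd]; linarith
  have g₄ : q₁/d + q₂/d + q₃/d ≤ 1 := by
    rw [← add_div, ← add_div, div_le_one hd]; linarith
  linarith

theorem stmt8 (d : ℝ) (hd : 0 < d) (m₁ m₂ m₃ : ℕ)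
    (h₁ : 2 ≤ m₁) (h₂ : 2 ≤ m₂) (h₃ : 2 ≤ m₃)
    (hsum : 1 / ((m₁ : ℝ) - 1) + 1 / ((m₂ : ℝ) - 1) + 1 / ((m₃ : ℝ) - 1) > 1)
    (p p₁ p₂ p₃ : ℝ) (hp : 0 ≤ p) (hp₁ : 0 ≤ p₁) (hp₂ : 0 ≤ p₂) (hp₃ : 0 ≤ p₃)
    (hps : p + p₁ + p₂ + p₃ = d) :
    g d m₁ p₁ + g d m₂ p₂ + g d m₃ p₃ < 2 * d ^ 2 := by
  rw [g_eq_G, g_eq_G, g_eq_G]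
  set a₁ : ℝ := (m₁ : ℝ) - 1 with ha₁def
  set a₂ : ℝ := (m₂ : ℝ) - 1 with ha₂def
  set a₃ : ℝ := (m₃ : ℝ) - 1 with ha₃def
  have ha₁ : (1:ℝ) ≤ a₁ := by
    have : (2:ℝ) ≤ (m₁ : ℝ) := by exact_mod_cast h₁
    simp only [ha₁def]; linarith
  have ha₂ : (1:ℝ) ≤ a₂ := by
    have : (2:ℝ) ≤ (m₂ : ℝ) := by exact_mod_cast h₂
    simp only [ha₂def]; linarith
  have ha₃ : (1:ℝ) ≤ a₃ := by
    have : (2:ℝ) ≤ (m₃ : ℝ) := by exact_mod_cast h₃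
    simp only [ha₃def]; linarith
  have hs : 1 < 1/a₁ + 1/a₂ + 1/a₃ := hsum
  simp only [G]
  rcases le_or_gt (a₁ * p₁) d with c₁ | c₁ <;>
    rcases le_or_gt (a₂ * p₂) d with c₂ | c₂ <;>
      rcases le_or_gt (a₃ * p₃) d with c₃ | c₃
  · rw [if_pos c₁, if_pos c₂, if_pos c₃]
    exact caseA d a₁ a₂ a₃ p p₁ p₂ p₃ hd ha₁ ha₂ ha₃ hp₁ hp₂ hp₃ hp hps hs c₁ c₂ c₃
  · rw [if_pos c₁, if_pos c₂, if_neg (not_le.mpr c₃)]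
    exact caseB d a₁ a₂ a₃ p p₁ p₂ p₃ hd ha₁ ha₂ ha₃ hp₁ hp₂ hp₃ hp hps hs c₁ c₂ c₃
  · rw [if_pos c₁, if_neg (not_le.mpr c₂), if_pos c₃]
    have := caseB d a₁ a₃ a₂ p p₁ p₃ p₂ hd ha₁ ha₃ ha₂ hp₁ hp₃ hp₂ hp
      (by linarith) (by linarith) c₁ c₃ c₂
    linarith
  · rw [if_pos c₁, if_neg (not_le.mpr c₂), if_neg (not_le.mpr c₃)]
    exact caseC d a₁ a₂ a₃ p p₁ p₂ p₃ hd ha₁ ha₂ ha₃ hp₁ hp₂ hp₃ hp hps hs c₁ c₂ c₃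
  · rw [if_neg (not_le.mpr c₁), if_pos c₂, if_pos c₃]
    have := caseB d a₂ a₃ a₁ p p₂ p₃ p₁ hd ha₂ ha₃ ha₁ hp₂ hp₃ hp₁ hp
      (by linarith) (by linarith) c₂ c₃ c₁
    linarith
  · rw [if_neg (not_le.mpr c₁), if_pos c₂, if_neg (not_le.mpr c₃)]
    have := caseC d a₂ a₁ a₃ p p₂ p₁ p₃ hd ha₂ ha₁ ha₃ hp₂ hp₁ hp₃ hp
      (by linarith) (by linarith) c₂ c₁ c₃
    linarith
  · rw [if_neg (not_le.mpr c₁), if_neg (not_le.mpr c₂), if_pos c₃]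
    have := caseC d a₃ a₁ a₂ p p₃ p₁ p₂ hd ha₃ ha₁ ha₂ hp₃ hp₁ hp₂ hp
      (by linarith) (by linarith) c₃ c₁ c₂
    linarith
  · exact (caseD d a₁ a₂ a₃ p p₁ p₂ p₃ hd ha₁ ha₂ ha₃ hp₁ hp₂ hp₃ hp hps hs
      c₁ c₂ c₃).elim
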